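/- Let G be a connected simple graph with n vertices, m edges and cyclomatic number γ = m − n + 1. Suppose G has at least one vertex of degree 1 and 0 < nᵢ < n for some i with 3 ≤ i ≤ n − 1. Then the number m_{i,i} of edges joining two vertices of degree i satisfies m_{i,i} ≤ nᵢ − 1 + γ. -/

import Mathlib

open Finset

/-- Number of vertices of degree `i` in `G`. -/
def nDeg {V : Type*} [Fintype V] (G : SimpleGraph V) [DecidableRel G.Adj] (i : ℕ) : ℕ :=
  (Finset.univ.filter (fun v => G.degree v = i)).card

open scoped Classical in
/-- Number of edges of `G` joining a vertex of degree `i` with a vertex of degree `j`. -/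
noncomputable def mEdges {V : Type*} [Fintype V] [DecidableEq V] (G : SimpleGraph V)
    [DecidableRel G.Adj] (i j : ℕ) : ℕ :=
  (G.edgeFinset.filter
    (fun e => ∃ u v, e = s(u, v) ∧ G.degree u = i ∧ G.degree v = j)).card

/-- The Randić index of a graph. -/
noncomputable def randic {V : Type*} [Fintype V] [DecidableEq V] (G : SimpleGraph V)
    [DecidableRel G.Adj] : ℝ :=
  ∑ e ∈ G.edgeFinset,
    Sym2.lift ⟨fun u v => 1 / Real.sqrt ((G.degree u : ℝ) * (G.degree v : ℝ)),
      fun u v => by simp [mul_comm]⟩ e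

lemma exists_closer_adj {V : Type*} (G : SimpleGraph V) (hconn : G.Connected) {v r : V}
    (h : v ≠ r) : ∃ w, G.Adj v w ∧ G.dist w r < G.dist v r := by
  obtain ⟨p, hp⟩ := hconn.exists_walk_length_eq_dist v r
  cases p with
  | nil => exact absurd rfl h
  | @cons _ w _ hadj q =>
    refine ⟨w, hadj, ?_⟩
    calc G.dist w r ≤ q.length := SimpleGraph.dist_le q
    _ < _ := by rw [← hp]; simp

theorem stmt_13 {V : Type*} [Fintype V] [DecidableEq V] (G : SimpleGraph V) [DecidableRel G.Adj]
    (n m γ : ℕ) (hconn : G.Connected) (hn : Fintype.card V = n)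
    (hm : G.edgeFinset.card = m) (hγ : (γ : ℤ) = (m : ℤ) - n + 1)
    (h1 : 1 ≤ nDeg G 1) (i : ℕ) (hi3 : 3 ≤ i) (hin : i ≤ n - 1)
    (hpos : 0 < nDeg G i) (hlt : nDeg G i < n) :
    (mEdges G i i : ℤ) ≤ (nDeg G i : ℤ) - 1 + γ := by
  classical
  -- pick a root of degree i
  obtain ⟨r, hr⟩ : ∃ r, G.degree r = i := by
    have := Finset.card_pos.mp hpos
    obtain ⟨r, hrmem⟩ := this
    exact ⟨r, (Finset.mem_filter.mp hrmem).2⟩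
  set T : Finset V := Finset.univ.filter (fun v => ¬ G.degree v = i) with hT
  have hTcard : nDeg G i + T.card = n := by
    rw [← hn, ← Finset.card_univ, nDeg, hT]
    exact Finset.card_filter_add_card_filter_not (fun v => G.degree v = i)
  set P : Sym2 V → Prop := fun e => ∃ u v, e = s(u, v) ∧ G.degree u = i ∧ G.degree v = i with hP
  set F : Finset (Sym2 V) := G.edgeFinset.filter (fun e => ¬ P e) with hF
  have hmEF : mEdges G i i + F.card = m := by
    rw [← hm]
    simpa [mEdges, hF, hP] using Finset.card_filter_add_card_filter_not
      (s := G.edgeFinset) (p := P)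
  -- choose for each vertex ≠ r a closer neighbor
  choose w hadj hdist using fun v (h : v ≠ r) => exists_closer_adj G hconn h
  have key : T.card ≤ F.card := by
    refine Finset.card_le_card_of_injOn
      (fun v => if h : v = r then s(v, v) else s(v, w v h)) ?_ ?_
    · intro v hv
      have hvdeg : ¬ G.degree v = i := (Finset.mem_filter.mp hv).2
      have hvr : v ≠ r := fun h => hvdeg (h ▸ hr)
      simp only [dif_neg hvr]
      rw [hF, Finset.mem_coe, Finset.mem_filter]
      refine ⟨SimpleGraph.mem_edgeFinset.mpr (hadj v hvr), ?_⟩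
      rintro ⟨a, b, hab, ha, hb⟩
      rw [Sym2.eq_iff] at hab
      rcases hab with ⟨h1', -⟩ | ⟨h1', -⟩
      · exact hvdeg (by rw [h1']; exact ha)
      · exact hvdeg (by rw [h1']; exact hb)
    · intro x hx y hy hxy
      have hxdeg : ¬ G.degree x = i := (Finset.mem_filter.mp hx).2
      have hydeg : ¬ G.degree y = i := (Finset.mem_filter.mp hy).2
      have hxr : x ≠ r := fun h => hxdeg (h ▸ hr)
      have hyr : y ≠ r := fun h => hydeg (h ▸ hr)
      simp only [dif_neg hxr, dif_neg hyr, Sym2.eq_iff] at hxy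
      rcases hxy with ⟨h1', _⟩ | ⟨h1', h2'⟩
      · exact h1'
      · exfalso
        have d1 := hdist x hxr
        have d2 := hdist y hyr
        rw [h2'] at d1
        rw [← h1'] at d2
        omega
  have hfin : mEdges G i i + T.card ≤ m := by omega
  have hle : nDeg G i ≤ n := by omega
  push_cast at *
  omega
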